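/- The function u(x) = sin_{v,w}(x) satisfies the initial value problem (|u'|^{v-2} u')' + ((v-1)w/v)·|u|^{w-2}·u = 0 with u(0)=0, u'(0)=1, on a neighborhood of 0, for v > 1 and w > 1. -/

import Mathlib

open MeasureTheory Set

/-- `s` is the generalized sine `sin_{v,w}` on the open set `D` (the inverse of
`arcsin_{v,w}(y) = ∫₀^y (1-|t|^w)^(-1/v) dt`) and `c = sin_{v,w}' = cos_{v,w}`. -/
def IsGenSin (v w : ℝ) (D : Set ℝ) (s c : ℝ → ℝ) : Prop :=
  IsOpen D ∧ (∀ x ∈ D, s x ∈ Set.Ioo (-1 : ℝ) 1) ∧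
    (∀ x ∈ D, (∫ t in (0:ℝ)..(s x), (1 - |t| ^ w) ^ (-1 / v)) = x) ∧
    (∀ x ∈ D, HasDerivAt s (c x) x)

/-- For `v > 1` and `w > 1`, `u = sin_{v,w}` solves the initial value problem
`(|u'|^(v-2) u')' + ((v-1)w/v)·|u|^(w-2)·u = 0`, `u(0) = 0`, `u'(0) = 1`,
on a neighborhood of `0`. -/
theorem stmt5 (v w : ℝ) (hv : 1 < v) (hw : 1 < w)
    (D : Set ℝ) (s c : ℝ → ℝ) (h : IsGenSin v w D s c) (h0 : 0 ∈ D) :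
    s 0 = 0 ∧ c 0 = 1 ∧ ∃ ε > (0:ℝ), ∀ x : ℝ, |x| < ε →
      deriv (fun t => |c t| ^ (v - 2) * c t) x
        + (v - 1) * w / v * (|s x| ^ (w - 2) * s x) = 0 := by
  obtain ⟨hD, hs1, hFs, hds⟩ := h
  have hv0 : (0:ℝ) < v := by linarith
  set f : ℝ → ℝ := fun t => (1 - |t| ^ w) ^ (-1 / v) with hfdef
  -- basic facts about the integrand
  have hbase : ∀ y ∈ Set.Ioo (-1:ℝ) 1, 0 < 1 - |y| ^ w := by
    intro y hy
    rcases eq_or_ne y 0 with rfl | hy0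
    · simp [Real.zero_rpow (by positivity : w ≠ 0)]
    · have h1 : |y| ^ w < 1 :=
        Real.rpow_lt_one (abs_nonneg _) (abs_lt.2 ⟨hy.1, hy.2⟩) (by linarith)
      linarith
  have hfpos : ∀ y ∈ Set.Ioo (-1:ℝ) 1, 0 < f y := fun y hy =>
    Real.rpow_pos_of_pos (hbase y hy) _
  have hfc : ∀ y ∈ Set.Ioo (-1:ℝ) 1, ContinuousAt f y := by
    intro y hy
    have h1 : ContinuousAt (fun t : ℝ => 1 - |t| ^ w) y := by
      apply ContinuousAt.sub continuousAt_const
      exact (Real.continuousAt_rpow_const _ _ (Or.inr (by linarith))).comp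
        continuous_abs.continuousAt
    exact h1.rpow_const (Or.inl (hbase y hy).ne')
  -- interval integrability over subintervals of (-1,1)
  have hInt : ∀ a b : ℝ, a ∈ Set.Ioo (-1:ℝ) 1 → b ∈ Set.Ioo (-1:ℝ) 1 →
      IntervalIntegrable f volume a b := by
    intro a b ha hb
    apply ContinuousOn.intervalIntegrable
    intro t ht
    have hsub : Set.uIcc a b ⊆ Set.Ioo (-1:ℝ) 1 := (Set.ordConnected_Ioo).uIcc_subset ha hb
    exact (hfc t (hsub ht)).continuousWithinAt
  have h01 : (0:ℝ) ∈ Set.Ioo (-1:ℝ) 1 := by norm_num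
  -- s 0 = 0
  have hs0 : s 0 = 0 := by
    have hint := hFs 0 h0
    rcases lt_trichotomy (s 0) 0 with hlt | heq | hgt
    · exfalso
      have hpos : 0 < ∫ t in (s 0)..(0:ℝ), f t := by
        apply intervalIntegral.intervalIntegral_pos_of_pos_on
          (hInt _ _ (hs1 0 h0) h01)
        · intro t ht
          exact hfpos t ⟨lt_trans (hs1 0 h0).1 ht.1, ht.2.trans_le (by norm_num)⟩
        · exact hlt
      rw [intervalIntegral.integral_symm 0 (s 0), hint] at hpos
      norm_num at hpos
    · exact heq
    · exfalso
      have hpos : 0 < ∫ t in (0:ℝ)..(s 0), f t := by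
        apply intervalIntegral.intervalIntegral_pos_of_pos_on
          (hInt _ _ h01 (hs1 0 h0))
        · intro t ht
          exact hfpos t ⟨lt_of_le_of_lt (by norm_num) ht.1, ht.2.trans (hs1 0 h0).2⟩
        · exact hgt
      rw [hint] at hpos
      linarith
  -- FTC: derivative of F at points of (-1,1)
  have hFTC : ∀ y ∈ Set.Ioo (-1:ℝ) 1,
      HasDerivAt (fun u => ∫ t in (0:ℝ)..u, f t) (f y) y := by
    intro y hy
    exact intervalIntegral.integral_hasDerivAt_right (hInt _ _ h01 hy)
      (ContinuousAt.stronglyMeasurableAtFilter isOpen_Ioo hfc y hy) (hfc y hy)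
  -- key identity: f (s x) * c x = 1 on D
  have hkey : ∀ x ∈ D, f (s x) * c x = 1 := by
    intro x hx
    have hcomp : HasDerivAt (fun t => ∫ u in (0:ℝ)..(s t), f u) (f (s x) * c x) x :=
      (hFTC (s x) (hs1 x hx)).comp x (hds x hx)
    have heq : (fun t : ℝ => t) =ᶠ[nhds x] (fun t => ∫ u in (0:ℝ)..(s t), f u) := by
      filter_upwards [hD.mem_nhds hx] with t ht
      exact (hFs t ht).symm
    have hid : HasDerivAt (fun t : ℝ => t) (f (s x) * c x) x :=
      hcomp.congr_of_eventuallyEq heq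
    have := hid.unique (hasDerivAt_id x)
    linarith [this]
  -- c x = (1 - |s x|^w) ^ (1/v) on D
  have hcval : ∀ x ∈ D, c x = (1 - |s x| ^ w) ^ (1/v : ℝ) := by
    intro x hx
    have hA : 0 < 1 - |s x| ^ w := hbase _ (hs1 x hx)
    have h1 := hkey x hx
    have h2 : (1 - |s x| ^ w) ^ (-1/v : ℝ) * (1 - |s x| ^ w) ^ (1/v : ℝ) = 1 := by
      rw [← Real.rpow_add hA, show (-1/v + 1/v : ℝ) = 0 by ring, Real.rpow_zero]
    have h3 : (1 - |s x| ^ w) ^ (-1/v : ℝ) ≠ 0 := by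
      positivity
    simp only [hfdef] at h1
    calc c x = ((1 - |s x| ^ w) ^ (1/v:ℝ) * (1 - |s x| ^ w) ^ (-1/v:ℝ)) * c x := by
          rw [mul_comm ((1 - |s x| ^ w) ^ (1/v:ℝ)), h2, one_mul]
      _ = (1 - |s x| ^ w) ^ (1/v:ℝ) * ((1 - |s x| ^ w) ^ (-1/v:ℝ) * c x) := by ring
      _ = (1 - |s x| ^ w) ^ (1/v:ℝ) := by rw [h1, mul_one]
  have hcpos : ∀ x ∈ D, 0 < c x := by
    intro x hx
    rw [hcval x hx]
    exact Real.rpow_pos_of_pos (hbase _ (hs1 x hx)) _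
  have hc0 : c 0 = 1 := by
    rw [hcval 0 h0, hs0]
    simp [Real.zero_rpow (by positivity : w ≠ 0)]
  refine ⟨hs0, hc0, ?_⟩
  -- the main derivative computation
  obtain ⟨ε, hε, hball⟩ := Metric.isOpen_iff.1 hD 0 h0
  refine ⟨ε, hε, fun x hxε => ?_⟩
  have hx : x ∈ D := hball (by simpa [Real.dist_eq] using hxε)
  have hA : 0 < 1 - |s x| ^ w := hbase _ (hs1 x hx)
  -- g agrees with G on D
  have hgG : (fun t => |c t| ^ (v-2) * c t) =ᶠ[nhds x]
      (fun t => (1 - |s t| ^ w) ^ ((v-1)/v : ℝ)) := by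
    filter_upwards [hD.mem_nhds hx] with t ht
    have hAt : 0 < 1 - |s t| ^ w := hbase _ (hs1 t ht)
    have hsplit : (1 - |s t| ^ w) ^ ((v-1)/v : ℝ)
        = (1 - |s t| ^ w) ^ ((1/v)*(v-2) : ℝ) * (1 - |s t| ^ w) ^ (1/v : ℝ) := by
      rw [← Real.rpow_add hAt]
      congr 1
      field_simp
      ring
    rw [abs_of_pos (hcpos t ht), hcval t ht, ← Real.rpow_mul hAt.le, hsplit]
  -- derivative of G at x
  have hinner : HasDerivAt (fun t => 1 - |s t| ^ w)
      (-(w * |s x| ^ (w - 2) * s x * c x)) x := by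
    simpa [Pi.sub_def, Function.comp_def] using
      (hasDerivAt_const x (1:ℝ)).sub (((hasDerivAt_abs_rpow (s x) hw)).comp x (hds x hx))
  have houter : HasDerivAt (fun u : ℝ => u ^ ((v-1)/v : ℝ))
      (((v-1)/v) * (1 - |s x| ^ w) ^ ((v-1)/v - 1 : ℝ)) (1 - |s x| ^ w) :=
    Real.hasDerivAt_rpow_const (Or.inl hA.ne')
  have hG : HasDerivAt (fun t => (1 - |s t| ^ w) ^ ((v-1)/v : ℝ))
      (((v-1)/v) * (1 - |s x| ^ w) ^ ((v-1)/v - 1 : ℝ)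
        * (-(w * |s x| ^ (w - 2) * s x * c x))) x :=
    by have := houter.comp x hinner; exact this
  -- simplify the derivative value
  have hval : ((v-1)/v) * (1 - |s x| ^ w) ^ ((v-1)/v - 1 : ℝ)
        * (-(w * |s x| ^ (w - 2) * s x * c x))
      = -((v - 1) * w / v * (|s x| ^ (w - 2) * s x)) := by
    rw [hcval x hx]
    have : (1 - |s x| ^ w) ^ ((v-1)/v - 1 : ℝ) * (1 - |s x| ^ w) ^ (1/v : ℝ) = 1 := by
      rw [← Real.rpow_add hA]
      rw [show ((v-1)/v - 1 + 1/v : ℝ) = 0 by field_simp; ring]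
      exact Real.rpow_zero _
    linear_combination (-((v-1)/v * w * (|s x| ^ (w-2) * s x))) * this
  have hderiv : deriv (fun t => |c t| ^ (v-2) * c t) x
      = -((v - 1) * w / v * (|s x| ^ (w - 2) * s x)) := by
    rw [Filter.EventuallyEq.deriv_eq hgG, hG.deriv, hval]
  rw [hderiv]
  ring
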